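/- Suppose V has dimension 3 over ℝ. Then for every element U of the Clifford algebra Cl(Q), writing Û = involute(U), Ũ = reverse(U), Û̃ = reverse(involute(U)), the following four sums are all equal and each is a scalar (lies in the range of the algebra map ℝ → Cl(Q)): U·Ũ·Û̃·Û + Ũ·U·Û·Û̃ = U·Û·Û̃·Ũ + Û·U·Ũ·Û̃ = Û̃·Ũ·U·Û + Ũ·Û̃·Û·U = Û·Û̃·Ũ·U + Û̃·Û·U·Ũ. -/

import Mathlib

set_option maxHeartbeats 4000000
open CliffordAlgebra

private theorem spanLemma {V : Type*} [AddCommGroup V] [Module ℝ V] (Q : QuadraticForm ℝ V)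
    (b : Module.Basis (Fin 3) ℝ V) (hb : ∀ i j : Fin 3, i ≠ j → Q.IsOrtho (b i) (b j))
    (U : CliffordAlgebra Q) :
    ∃ c : Fin 8 → ℝ, U = c 0 • (1 : CliffordAlgebra Q) + c 1 • ι Q (b 0) + c 2 • ι Q (b 1)
      + c 3 • ι Q (b 2) + c 4 • (ι Q (b 0) * ι Q (b 1)) + c 5 • (ι Q (b 0) * ι Q (b 2))
      + c 6 • (ι Q (b 1) * ι Q (b 2)) + c 7 • (ι Q (b 0) * (ι Q (b 1) * ι Q (b 2))) := by
  have hanti : ∀ i j : Fin 3, i ≠ j →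
      ι Q (b i) * ι Q (b j) = -(ι Q (b j) * ι Q (b i)) := fun i j hij =>
    ι_mul_ι_comm_of_isOrtho (hb i j hij)
  have hsqh : ∀ (i : Fin 3) (x : CliffordAlgebra Q),
      ι Q (b i) * (ι Q (b i) * x) = Q (b i) • x := by
    intro i x
    rw [← mul_assoc, ι_sq_scalar, Algebra.smul_def]
  have hw10 : ∀ x : CliffordAlgebra Q,
      ι Q (b 1) * (ι Q (b 0) * x) = -(ι Q (b 0) * (ι Q (b 1) * x)) := by
    intro x; rw [← mul_assoc, hanti 1 0 (by decide), neg_mul, mul_assoc]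
  have hw20 : ∀ x : CliffordAlgebra Q,
      ι Q (b 2) * (ι Q (b 0) * x) = -(ι Q (b 0) * (ι Q (b 2) * x)) := by
    intro x; rw [← mul_assoc, hanti 2 0 (by decide), neg_mul, mul_assoc]
  have hw21 : ∀ x : CliffordAlgebra Q,
      ι Q (b 2) * (ι Q (b 1) * x) = -(ι Q (b 1) * (ι Q (b 2) * x)) := by
    intro x; rw [← mul_assoc, hanti 2 1 (by decide), neg_mul, mul_assoc]
  have hsqt : ∀ i : Fin 3, ι Q (b i) * ι Q (b i) = Q (b i) • 1 := by
    intro i; rw [ι_sq_scalar, Algebra.algebraMap_eq_smul_one]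
  have ht10 := hanti 1 0 (by decide)
  have ht20 := hanti 2 0 (by decide)
  have ht21 := hanti 2 1 (by decide)
  let m : Fin 8 → CliffordAlgebra Q := fun i => match i with
    | 0 => 1
    | 1 => ι Q (b 0)
    | 2 => ι Q (b 1)
    | 3 => ι Q (b 2)
    | 4 => ι Q (b 0) * ι Q (b 1)
    | 5 => ι Q (b 0) * ι Q (b 2)
    | 6 => ι Q (b 1) * ι Q (b 2)
    | 7 => ι Q (b 0) * (ι Q (b 1) * ι Q (b 2))
  have hmem : ∀ i : Fin 8, m i ∈ Submodule.span ℝ (Set.range m) :=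
    fun i => Submodule.subset_span ⟨i, rfl⟩
  have hPtop : ∀ x : CliffordAlgebra Q, x ∈ Submodule.span ℝ (Set.range m) := by
    set P := Submodule.span ℝ (Set.range m) with hP
    have hmulP : ∀ x y : CliffordAlgebra Q, x ∈ P → y ∈ P → x * y ∈ P := by
      intro x y hx hy
      have hPP : P * P ≤ P := by
        rw [hP, Submodule.span_mul_span]
        refine Submodule.span_le.mpr ?_
        rintro z hz
        rw [Set.mem_mul] at hz
        obtain ⟨a, ⟨i, rfl⟩, c, ⟨j, rfl⟩, rfl⟩ := hz
        fin_cases i <;> fin_cases j <;>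
          simp only [m, mul_assoc, one_mul, mul_one, hsqh, hsqt, hw10, hw20, hw21, ht10, ht20,
            ht21, mul_neg, neg_mul, neg_neg, mul_smul_comm, smul_mul_assoc, smul_smul,
            smul_neg, neg_smul, mul_add, add_mul] <;>
          (repeat' first
            | apply Submodule.neg_mem
            | apply Submodule.smul_mem) <;>
          first
            | exact hmem 0 | exact hmem 1 | exact hmem 2 | exact hmem 3
            | exact hmem 4 | exact hmem 5 | exact hmem 6 | exact hmem 7
      exact hPP (Submodule.mul_mem_mul hx hy)
    intro x
    induction x using CliffordAlgebra.induction with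
    | algebraMap r =>
        rw [Algebra.algebraMap_eq_smul_one]
        exact P.smul_mem r (hmem 0)
    | ι w =>
        have hw : ι Q w = (b.repr w 0) • ι Q (b 0) + (b.repr w 1) • ι Q (b 1)
            + (b.repr w 2) • ι Q (b 2) := by
          conv_lhs => rw [← b.sum_repr w]
          rw [map_sum, Fin.sum_univ_three]
          simp [map_smul]
        rw [hw]
        exact P.add_mem (P.add_mem (P.smul_mem _ (hmem 1)) (P.smul_mem _ (hmem 2)))
          (P.smul_mem _ (hmem 3))
    | mul a c ha hc => exact hmulP a c ha hc
    | add a c ha hc => exact P.add_mem ha hc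
  obtain ⟨c, hc⟩ := (Submodule.mem_span_range_iff_exists_fun ℝ).mp (hPtop U)
  refine ⟨c, ?_⟩
  rw [← hc, Fin.sum_univ_eight]

private theorem auxCompute {A : Type*} [Ring A] [Algebra ℝ A]
    (x y z : A) (q0 q1 q2 : ℝ)
    (hx : x * x = q0 • 1) (hy : y * y = q1 • 1) (hz : z * z = q2 • 1)
    (hxy : y * x = -(x * y)) (hxz : z * x = -(x * z)) (hyz : z * y = -(y * z))
    (c : Fin 8 → ℝ) (u ub uc ud : A)
    (hu : u = ((c 0) • (1 : A) + (c 1) • x + (c 2) • y + (c 3) • z + (c 4) • (x * y) + (c 5) • (x * z) + (c 6) • (y * z) + (c 7) • (x * (y * z))))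
    (hub : ub = ((c 0) • (1 : A) + (c 1) • x + (c 2) • y + (c 3) • z + (-c 4) • (x * y) + (-c 5) • (x * z) + (-c 6) • (y * z) + (-c 7) • (x * (y * z))))
    (huc : uc = ((c 0) • (1 : A) + (-c 1) • x + (-c 2) • y + (-c 3) • z + (-c 4) • (x * y) + (-c 5) • (x * z) + (-c 6) • (y * z) + (c 7) • (x * (y * z))))
    (hud : ud = ((c 0) • (1 : A) + (-c 1) • x + (-c 2) • y + (-c 3) • z + (c 4) • (x * y) + (c 5) • (x * z) + (c 6) • (y * z) + (-c 7) • (x * (y * z)))) :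
    (u * ub * uc * ud + ub * u * ud * uc = u * ud * uc * ub + ud * u * ub * uc) ∧
    (u * ud * uc * ub + ud * u * ub * uc = uc * ub * u * ud + ub * uc * ud * u) ∧
    (uc * ub * u * ud + ub * uc * ud * u = ud * uc * ub * u + uc * ud * u * ub) ∧
    (∃ r : ℝ, u * ub * uc * ud + ub * u * ud * uc = r • (1 : A)) := by
  have hsqh0 : ∀ w : A, x * (x * w) = q0 • w := fun w => by
    rw [← mul_assoc, hx, smul_mul_assoc, one_mul]
  have hsqh1 : ∀ w : A, y * (y * w) = q1 • w := fun w => by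
    rw [← mul_assoc, hy, smul_mul_assoc, one_mul]
  have hsqh2 : ∀ w : A, z * (z * w) = q2 • w := fun w => by
    rw [← mul_assoc, hz, smul_mul_assoc, one_mul]
  have hw10 : ∀ w : A, y * (x * w) = -(x * (y * w)) := fun w => by
    rw [← mul_assoc, hxy, neg_mul, mul_assoc]
  have hw20 : ∀ w : A, z * (x * w) = -(x * (z * w)) := fun w => by
    rw [← mul_assoc, hxz, neg_mul, mul_assoc]
  have hw21 : ∀ w : A, z * (y * w) = -(y * (z * w)) := fun w => by
    rw [← mul_assoc, hyz, neg_mul, mul_assoc]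
  have hAB : u * ub = ((c 7*c 7*q0*q1*q2 + c 6*c 6*q1*q2 + c 5*c 5*q0*q2 + c 4*c 4*q0*q1 + c 3*c 3*q2 + c 2*c 2*q1 + c 1*c 1*q0 + c 0*c 0) • (1 : A) + (2*c 6*c 7*q1*q2 + 2*c 3*c 5*q2 + 2*c 2*c 4*q1 + 2*c 0*c 1) • x + (-2*c 5*c 7*q0*q2 + 2*c 3*c 6*q2 - 2*c 1*c 4*q0 + 2*c 0*c 2) • y + (2*c 4*c 7*q0*q1 - 2*c 2*c 6*q1 - 2*c 1*c 5*q0 + 2*c 0*c 3) • z) := by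
    rw [hu, hub]
    simp only [mul_assoc, one_mul, mul_one, hsqh0, hsqh1, hsqh2, hw10, hw20, hw21, hx, hy, hz, hxy, hxz, hyz, mul_neg, neg_mul, neg_neg, mul_smul_comm, smul_mul_assoc, smul_smul, smul_neg, neg_smul, mul_add, add_mul, sub_eq_add_neg]
    module
  have hBA : ub * u = ((c 7*c 7*q0*q1*q2 + c 6*c 6*q1*q2 + c 5*c 5*q0*q2 + c 4*c 4*q0*q1 + c 3*c 3*q2 + c 2*c 2*q1 + c 1*c 1*q0 + c 0*c 0) • (1 : A) + (2*c 6*c 7*q1*q2 - 2*c 3*c 5*q2 - 2*c 2*c 4*q1 + 2*c 0*c 1) • x + (-2*c 5*c 7*q0*q2 - 2*c 3*c 6*q2 + 2*c 1*c 4*q0 + 2*c 0*c 2) • y + (2*c 4*c 7*q0*q1 + 2*c 2*c 6*q1 + 2*c 1*c 5*q0 + 2*c 0*c 3) • z) := by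
    rw [hub, hu]
    simp only [mul_assoc, one_mul, mul_one, hsqh0, hsqh1, hsqh2, hw10, hw20, hw21, hx, hy, hz, hxy, hxz, hyz, mul_neg, neg_mul, neg_neg, mul_smul_comm, smul_mul_assoc, smul_smul, smul_neg, neg_smul, mul_add, add_mul, sub_eq_add_neg]
    module
  have hAD : u * ud = ((c 7*c 7*q0*q1*q2 - c 6*c 6*q1*q2 - c 5*c 5*q0*q2 - c 4*c 4*q0*q1 - c 3*c 3*q2 - c 2*c 2*q1 - c 1*c 1*q0 + c 0*c 0) • (1 : A) + (-2*c 3*c 5*q2 - 2*c 2*c 4*q1) • x + (-2*c 3*c 6*q2 + 2*c 1*c 4*q0) • y + (2*c 2*c 6*q1 + 2*c 1*c 5*q0) • z + (-2*c 3*c 7*q2 + 2*c 0*c 4) • (x * y) + (2*c 2*c 7*q1 + 2*c 0*c 5) • (x * z) + (-2*c 1*c 7*q0 + 2*c 0*c 6) • (y * z)) := by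
    rw [hu, hud]
    simp only [mul_assoc, one_mul, mul_one, hsqh0, hsqh1, hsqh2, hw10, hw20, hw21, hx, hy, hz, hxy, hxz, hyz, mul_neg, neg_mul, neg_neg, mul_smul_comm, smul_mul_assoc, smul_smul, smul_neg, neg_smul, mul_add, add_mul, sub_eq_add_neg]
    module
  have hDA : ud * u = ((c 7*c 7*q0*q1*q2 - c 6*c 6*q1*q2 - c 5*c 5*q0*q2 - c 4*c 4*q0*q1 - c 3*c 3*q2 - c 2*c 2*q1 - c 1*c 1*q0 + c 0*c 0) • (1 : A) + (2*c 3*c 5*q2 + 2*c 2*c 4*q1) • x + (2*c 3*c 6*q2 - 2*c 1*c 4*q0) • y + (-2*c 2*c 6*q1 - 2*c 1*c 5*q0) • z + (-2*c 3*c 7*q2 + 2*c 0*c 4) • (x * y) + (2*c 2*c 7*q1 + 2*c 0*c 5) • (x * z) + (-2*c 1*c 7*q0 + 2*c 0*c 6) • (y * z)) := by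
    rw [hud, hu]
    simp only [mul_assoc, one_mul, mul_one, hsqh0, hsqh1, hsqh2, hw10, hw20, hw21, hx, hy, hz, hxy, hxz, hyz, mul_neg, neg_mul, neg_neg, mul_smul_comm, smul_mul_assoc, smul_smul, smul_neg, neg_smul, mul_add, add_mul, sub_eq_add_neg]
    module
  have hCB : uc * ub = ((c 7*c 7*q0*q1*q2 - c 6*c 6*q1*q2 - c 5*c 5*q0*q2 - c 4*c 4*q0*q1 - c 3*c 3*q2 - c 2*c 2*q1 - c 1*c 1*q0 + c 0*c 0) • (1 : A) + (-2*c 3*c 5*q2 - 2*c 2*c 4*q1) • x + (-2*c 3*c 6*q2 + 2*c 1*c 4*q0) • y + (2*c 2*c 6*q1 + 2*c 1*c 5*q0) • z + (2*c 3*c 7*q2 - 2*c 0*c 4) • (x * y) + (-2*c 2*c 7*q1 - 2*c 0*c 5) • (x * z) + (2*c 1*c 7*q0 - 2*c 0*c 6) • (y * z)) := by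
    rw [huc, hub]
    simp only [mul_assoc, one_mul, mul_one, hsqh0, hsqh1, hsqh2, hw10, hw20, hw21, hx, hy, hz, hxy, hxz, hyz, mul_neg, neg_mul, neg_neg, mul_smul_comm, smul_mul_assoc, smul_smul, smul_neg, neg_smul, mul_add, add_mul, sub_eq_add_neg]
    module
  have hBC : ub * uc = ((c 7*c 7*q0*q1*q2 - c 6*c 6*q1*q2 - c 5*c 5*q0*q2 - c 4*c 4*q0*q1 - c 3*c 3*q2 - c 2*c 2*q1 - c 1*c 1*q0 + c 0*c 0) • (1 : A) + (2*c 3*c 5*q2 + 2*c 2*c 4*q1) • x + (2*c 3*c 6*q2 - 2*c 1*c 4*q0) • y + (-2*c 2*c 6*q1 - 2*c 1*c 5*q0) • z + (2*c 3*c 7*q2 - 2*c 0*c 4) • (x * y) + (-2*c 2*c 7*q1 - 2*c 0*c 5) • (x * z) + (2*c 1*c 7*q0 - 2*c 0*c 6) • (y * z)) := by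
    rw [hub, huc]
    simp only [mul_assoc, one_mul, mul_one, hsqh0, hsqh1, hsqh2, hw10, hw20, hw21, hx, hy, hz, hxy, hxz, hyz, mul_neg, neg_mul, neg_neg, mul_smul_comm, smul_mul_assoc, smul_smul, smul_neg, neg_smul, mul_add, add_mul, sub_eq_add_neg]
    module
  have hDC : ud * uc = ((c 7*c 7*q0*q1*q2 + c 6*c 6*q1*q2 + c 5*c 5*q0*q2 + c 4*c 4*q0*q1 + c 3*c 3*q2 + c 2*c 2*q1 + c 1*c 1*q0 + c 0*c 0) • (1 : A) + (-2*c 6*c 7*q1*q2 - 2*c 3*c 5*q2 - 2*c 2*c 4*q1 - 2*c 0*c 1) • x + (2*c 5*c 7*q0*q2 - 2*c 3*c 6*q2 + 2*c 1*c 4*q0 - 2*c 0*c 2) • y + (-2*c 4*c 7*q0*q1 + 2*c 2*c 6*q1 + 2*c 1*c 5*q0 - 2*c 0*c 3) • z) := by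
    rw [hud, huc]
    simp only [mul_assoc, one_mul, mul_one, hsqh0, hsqh1, hsqh2, hw10, hw20, hw21, hx, hy, hz, hxy, hxz, hyz, mul_neg, neg_mul, neg_neg, mul_smul_comm, smul_mul_assoc, smul_smul, smul_neg, neg_smul, mul_add, add_mul, sub_eq_add_neg]
    module
  have hCD : uc * ud = ((c 7*c 7*q0*q1*q2 + c 6*c 6*q1*q2 + c 5*c 5*q0*q2 + c 4*c 4*q0*q1 + c 3*c 3*q2 + c 2*c 2*q1 + c 1*c 1*q0 + c 0*c 0) • (1 : A) + (-2*c 6*c 7*q1*q2 + 2*c 3*c 5*q2 + 2*c 2*c 4*q1 - 2*c 0*c 1) • x + (2*c 5*c 7*q0*q2 + 2*c 3*c 6*q2 - 2*c 1*c 4*q0 - 2*c 0*c 2) • y + (-2*c 4*c 7*q0*q1 - 2*c 2*c 6*q1 - 2*c 1*c 5*q0 - 2*c 0*c 3) • z) := by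
    rw [huc, hud]
    simp only [mul_assoc, one_mul, mul_one, hsqh0, hsqh1, hsqh2, hw10, hw20, hw21, hx, hy, hz, hxy, hxz, hyz, mul_neg, neg_mul, neg_neg, mul_smul_comm, smul_mul_assoc, smul_smul, smul_neg, neg_smul, mul_add, add_mul, sub_eq_add_neg]
    module
  rw [mul_assoc (u * ub) uc ud, mul_assoc (ub * u) ud uc, mul_assoc (u * ud) uc ub,
    mul_assoc (ud * u) ub uc, mul_assoc (uc * ub) u ud, mul_assoc (ub * uc) ud u,
    mul_assoc (ud * uc) ub u, mul_assoc (uc * ud) u ub]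
  rw [hAB, hBA, hAD, hDA, hCB, hBC, hDC, hCD]
  refine ⟨?_, ?_, ?_, ?_⟩
  · simp only [mul_assoc, one_mul, mul_one, hsqh0, hsqh1, hsqh2, hw10, hw20, hw21, hx, hy, hz, hxy, hxz, hyz, mul_neg, neg_mul, neg_neg, mul_smul_comm, smul_mul_assoc, smul_smul, smul_neg, neg_smul, mul_add, add_mul, sub_eq_add_neg]
    module
  · simp only [mul_assoc, one_mul, mul_one, hsqh0, hsqh1, hsqh2, hw10, hw20, hw21, hx, hy, hz, hxy, hxz, hyz, mul_neg, neg_mul, neg_neg, mul_smul_comm, smul_mul_assoc, smul_smul, smul_neg, neg_smul, mul_add, add_mul, sub_eq_add_neg]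
    module
  · simp only [mul_assoc, one_mul, mul_one, hsqh0, hsqh1, hsqh2, hw10, hw20, hw21, hx, hy, hz, hxy, hxz, hyz, mul_neg, neg_mul, neg_neg, mul_smul_comm, smul_mul_assoc, smul_smul, smul_neg, neg_smul, mul_add, add_mul, sub_eq_add_neg]
    module
  · refine ⟨(2*c 7*c 7*c 7*c 7*q0*q0*q1*q1*q2*q2 - 4*c 6*c 6*c 7*c 7*q0*q1*q1*q2*q2 + 2*c 6*c 6*c 6*c 6*q1*q1*q2*q2 - 4*c 5*c 5*c 7*c 7*q0*q0*q1*q2*q2 + 4*c 5*c 5*c 6*c 6*q0*q1*q2*q2 + 2*c 5*c 5*c 5*c 5*q0*q0*q2*q2 - 4*c 4*c 4*c 7*c 7*q0*q0*q1*q1*q2 + 4*c 4*c 4*c 6*c 6*q0*q1*q1*q2 + 4*c 4*c 4*c 5*c 5*q0*q0*q1*q2 + 2*c 4*c 4*c 4*c 4*q0*q0*q1*q1 + 4*c 3*c 3*c 7*c 7*q0*q1*q2*q2 + 12*c 3*c 3*c 6*c 6*q1*q2*q2 + 12*c 3*c 3*c 5*c 5*q0*q2*q2 + 4*c 3*c 3*c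 4*c 4*q0*q1*q2 + 2*c 3*c 3*c 3*c 3*q2*q2 + 16*c 2*c 3*c 4*c 5*q0*q1*q2 + 4*c 2*c 2*c 7*c 7*q0*q1*q1*q2 + 12*c 2*c 2*c 6*c 6*q1*q1*q2 + 4*c 2*c 2*c 5*c 5*q0*q1*q2 + 12*c 2*c 2*c 4*c 4*q0*q1*q1 + 4*c 2*c 2*c 3*c 3*q1*q2 + 2*c 2*c 2*c 2*c 2*q1*q1 - 16*c 1*c 3*c 4*c 6*q0*q1*q2 + 16*c 1*c 2*c 5*c 6*q0*q1*q2 + 4*c 1*c 1*c 7*c 7*q0*q0*q1*q2 + 4*c 1*c 1*c 6*c 6*q0*q1*q2 + 12*c 1*c 1*c 5*c 5*q0*q0*q2 + 12*c 1*c 1*c 4*c 4*q0*q0*q1 + 4*c 1*c 1*c 3*c 3*q0*q2 + 4*c 1*c 1*c 2*c 2*q0*q1 + 2*c 1*c 1*c 1*c 1*q0*q0 - 16*c 0*c 3*c 4*c 7*q0*q1*q2 + 16*c 0*c 2*c 5*c 7*q0*q1*q2 - 16*c 0*c 1*c 6*c 7*q0*q1*q2 + 4*c 0*c 0*c 7*c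 7*q0*q1*q2 + 4*c 0*c 0*c 6*c 6*q1*q2 + 4*c 0*c 0*c 5*c 5*q0*q2 + 4*c 0*c 0*c 4*c 4*q0*q1 - 4*c 0*c 0*c 3*c 3*q2 - 4*c 0*c 0*c 2*c 2*q1 - 4*c 0*c 0*c 1*c 1*q0 + 2*c 0*c 0*c 0*c 0), ?_⟩
    simp only [mul_assoc, one_mul, mul_one, hsqh0, hsqh1, hsqh2, hw10, hw20, hw21, hx, hy, hz, hxy, hxz, hyz, mul_neg, neg_mul, neg_neg, mul_smul_comm, smul_mul_assoc, smul_smul, smul_neg, neg_smul, mul_add, add_mul, sub_eq_add_neg]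
    module

theorem stmt_14 {V : Type*} [AddCommGroup V] [Module ℝ V] (Q : QuadraticForm ℝ V)
    (h : Module.finrank ℝ V = 3) (U : CliffordAlgebra Q) :
    (U * reverse U * reverse (involute U) * involute U +
        reverse U * U * involute U * reverse (involute U) =
      U * involute U * reverse (involute U) * reverse U +
        involute U * U * reverse U * reverse (involute U)) ∧
    (U * involute U * reverse (involute U) * reverse U +
        involute U * U * reverse U * reverse (involute U) =
      reverse (involute U) * reverse U * U * involute U +
        reverse U * reverse (involute U) * involute U * U) ∧
    (reverse (involute U) * reverse U * U * involute U +
        reverse U * reverse (involute U) * involute U * U =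
      involute U * reverse (involute U) * reverse U * U +
        reverse (involute U) * involute U * U * reverse U) ∧
    U * reverse U * reverse (involute U) * involute U +
        reverse U * U * involute U * reverse (involute U) ∈
      Set.range (algebraMap ℝ (CliffordAlgebra Q)) := by
  haveI : FiniteDimensional ℝ V := FiniteDimensional.of_finrank_pos (by rw [h]; norm_num)
  obtain ⟨v, hv⟩ := LinearMap.BilinForm.exists_orthogonal_basis
    (QuadraticForm.associated_isSymm ℝ Q)
  let b : Module.Basis (Fin 3) ℝ V := v.reindex (finCongr h)
  have hb : ∀ i j : Fin 3, i ≠ j → Q.IsOrtho (b i) (b j) := by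
    intro i j hij
    have := hv (i := (finCongr h).symm i) (j := (finCongr h).symm j)
      (fun hh => hij (by simpa using congrArg (finCongr h) hh))
    simpa [b] using this
  have hanti : ∀ i j : Fin 3, i ≠ j →
      ι Q (b i) * ι Q (b j) = -(ι Q (b j) * ι Q (b i)) := fun i j hij =>
    ι_mul_ι_comm_of_isOrtho (hb i j hij)
  have hsqt : ∀ i : Fin 3, ι Q (b i) * ι Q (b i) = Q (b i) • 1 := by
    intro i; rw [ι_sq_scalar, Algebra.algebraMap_eq_smul_one]
  have hsqh : ∀ (i : Fin 3) (w : CliffordAlgebra Q),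
      ι Q (b i) * (ι Q (b i) * w) = Q (b i) • w := by
    intro i w
    rw [← mul_assoc, ι_sq_scalar, Algebra.smul_def]
  have hw10 : ∀ w : CliffordAlgebra Q,
      ι Q (b 1) * (ι Q (b 0) * w) = -(ι Q (b 0) * (ι Q (b 1) * w)) := by
    intro w; rw [← mul_assoc, hanti 1 0 (by decide), neg_mul, mul_assoc]
  have hw20 : ∀ w : CliffordAlgebra Q,
      ι Q (b 2) * (ι Q (b 0) * w) = -(ι Q (b 0) * (ι Q (b 2) * w)) := by
    intro w; rw [← mul_assoc, hanti 2 0 (by decide), neg_mul, mul_assoc]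
  have hw21 : ∀ w : CliffordAlgebra Q,
      ι Q (b 2) * (ι Q (b 1) * w) = -(ι Q (b 1) * (ι Q (b 2) * w)) := by
    intro w; rw [← mul_assoc, hanti 2 1 (by decide), neg_mul, mul_assoc]
  have ht10 := hanti 1 0 (by decide)
  have ht20 := hanti 2 0 (by decide)
  have ht21 := hanti 2 1 (by decide)
  obtain ⟨c, hU⟩ := spanLemma Q b hb U
  have hud : involute U = (c 0) • (1 : CliffordAlgebra Q) + (-c 1) • ι Q (b 0) + (-c 2) • ι Q (b 1) + (-c 3) • ι Q (b 2) + (c 4) • (ι Q (b 0) * ι Q (b 1)) + (c 5) • (ι Q (b 0) * ι Q (b 2)) + (c 6) • (ι Q (b 1) * ι Q (b 2)) + (-c 7) • (ι Q (b 0) * (ι Q (b 1) * ι Q (b 2))) := by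
    rw [hU]
    simp only [map_add, map_smul, map_neg, map_mul, map_one, involute_ι, mul_assoc, one_mul, mul_one, hsqh, hw10, hw20, hw21, ht10, ht20, ht21, hsqt, mul_neg, neg_mul, neg_neg, mul_smul_comm, smul_mul_assoc, smul_smul, smul_neg, neg_smul, mul_add, add_mul]
    try module
  have hub : reverse U = (c 0) • (1 : CliffordAlgebra Q) + (c 1) • ι Q (b 0) + (c 2) • ι Q (b 1) + (c 3) • ι Q (b 2) + (-c 4) • (ι Q (b 0) * ι Q (b 1)) + (-c 5) • (ι Q (b 0) * ι Q (b 2)) + (-c 6) • (ι Q (b 1) * ι Q (b 2)) + (-c 7) • (ι Q (b 0) * (ι Q (b 1) * ι Q (b 2))) := by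
    rw [hU]
    simp only [map_add, map_smul, map_neg, reverse.map_mul, reverse_ι, reverse.map_one, mul_assoc, one_mul, mul_one, hsqh, hw10, hw20, hw21, ht10, ht20, ht21, hsqt, mul_neg, neg_mul, neg_neg, mul_smul_comm, smul_mul_assoc, smul_smul, smul_neg, neg_smul, mul_add, add_mul]
    try module
  have huc : reverse (involute U) = (c 0) • (1 : CliffordAlgebra Q) + (-c 1) • ι Q (b 0) + (-c 2) • ι Q (b 1) + (-c 3) • ι Q (b 2) + (-c 4) • (ι Q (b 0) * ι Q (b 1)) + (-c 5) • (ι Q (b 0) * ι Q (b 2)) + (-c 6) • (ι Q (b 1) * ι Q (b 2)) + (c 7) • (ι Q (b 0) * (ι Q (b 1) * ι Q (b 2))) := by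
    rw [hud]
    simp only [map_add, map_smul, map_neg, reverse.map_mul, reverse_ι, reverse.map_one, mul_assoc, one_mul, mul_one, hsqh, hw10, hw20, hw21, ht10, ht20, ht21, hsqt, mul_neg, neg_mul, neg_neg, mul_smul_comm, smul_mul_assoc, smul_smul, smul_neg, neg_smul, mul_add, add_mul]
    try module
  obtain ⟨h1, h2, h3, r, h4⟩ := auxCompute (ι Q (b 0)) (ι Q (b 1)) (ι Q (b 2))
    (Q (b 0)) (Q (b 1)) (Q (b 2)) (hsqt 0) (hsqt 1) (hsqt 2)
    (ht10) (ht20) (ht21) c U (reverse U) (reverse (involute U)) (involute U)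
    hU hub huc hud
  exact ⟨h1, h2, h3, ⟨r, by rw [Algebra.algebraMap_eq_smul_one]; exact h4.symm⟩⟩
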